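/- Let ω = y dx − dz be the standard contact form on ℝ³, with the distribution H = ker ω spanned by ξ₁ = (0,1,0) and ξ₂ = (1,0,−y). Define f : ℝ³ → ℝ⁵ by f(x,y,z) = (y, x, e^y, e^x, z). Then the 5×5 matrix whose rows are L_{ξ₁} f, L_{ξ₂} f, L_{ξ₁}² f, L_{ξ₁}L_{ξ₂} f + L_{ξ₂}L_{ξ₁} f, and L_{ξ₂}² f has determinant e^{x+y}, hence is invertible at every point; therefore f is H-free. -/
import Mathlib


/-- Componentwise Lie (directional) derivative of an ℝ⁵-valued map along a vector field
on ℝ³. -/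
noncomputable def lieD5 (ξ : (Fin 3 → ℝ) → (Fin 3 → ℝ)) (g : (Fin 3 → ℝ) → (Fin 5 → ℝ)) :
    (Fin 3 → ℝ) → (Fin 5 → ℝ) := fun x => fderiv ℝ g x (ξ x)

noncomputable def xi1 : (Fin 3 → ℝ) → (Fin 3 → ℝ) := fun _ => ![0, 1, 0]

noncomputable def xi2 : (Fin 3 → ℝ) → (Fin 3 → ℝ) := fun p => ![1, 0, -(p 1)]

noncomputable def fMap : (Fin 3 → ℝ) → (Fin 5 → ℝ) :=
  fun p => ![p 1, p 0, Real.exp (p 1), Real.exp (p 0), p 2]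

open ContinuousLinearMap

noncomputable def D0 (p : Fin 3 → ℝ) : (Fin 3 → ℝ) →L[ℝ] (Fin 5 → ℝ) :=
  pi ![proj 1, proj 0, Real.exp (p 1) • proj 1, Real.exp (p 0) • proj 0, proj 2]

lemma hD0 (p : Fin 3 → ℝ) : HasFDerivAt fMap (D0 p) p := by
  apply hasFDerivAt_pi'.mpr
  intro i
  fin_cases i <;>
    simp only [fMap, D0, Matrix.cons_val_zero, Matrix.cons_val_one, Matrix.head_cons,
      Matrix.cons_val_two, Matrix.tail_cons, Matrix.cons_val_three, Matrix.cons_val_four,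
      proj_pi, Fin.isValue]
  · exact hasFDerivAt_apply 1 p
  · exact hasFDerivAt_apply 0 p
  · exact (hasFDerivAt_apply 1 p).exp
  · exact (hasFDerivAt_apply 0 p).exp
  · exact hasFDerivAt_apply 2 p

lemma lie1 : lieD5 xi1 fMap = fun p => ![(1:ℝ), 0, Real.exp (p 1), 0, 0] := by
  funext p
  show fderiv ℝ fMap p (xi1 p) = _
  rw [(hD0 p).fderiv]
  funext i
  fin_cases i <;> simp [D0, xi1]

lemma lie2 : lieD5 xi2 fMap = fun p => ![(0:ℝ), 1, 0, Real.exp (p 0), -(p 1)] := by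
  funext p
  show fderiv ℝ fMap p (xi2 p) = _
  rw [(hD0 p).fderiv]
  funext i
  fin_cases i <;> simp [D0, xi2]

noncomputable def DG1 (p : Fin 3 → ℝ) : (Fin 3 → ℝ) →L[ℝ] (Fin 5 → ℝ) :=
  pi ![0, 0, Real.exp (p 1) • proj 1, 0, 0]

lemma hDG1 (p : Fin 3 → ℝ) :
    HasFDerivAt (fun p => ![(1:ℝ), 0, Real.exp (p 1), 0, 0]) (DG1 p) p := by
  apply hasFDerivAt_pi'.mpr
  intro i
  fin_cases i <;>
    simp only [DG1, Matrix.cons_val_zero, Matrix.cons_val_one, Matrix.head_cons,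
      Matrix.cons_val_two, Matrix.tail_cons, Matrix.cons_val_three, Matrix.cons_val_four,
      proj_pi, Fin.isValue, ContinuousLinearMap.comp_zero]
  · exact hasFDerivAt_const _ _
  · exact hasFDerivAt_const _ _
  · exact (hasFDerivAt_apply 1 p).exp
  · exact hasFDerivAt_const _ _
  · exact hasFDerivAt_const _ _

noncomputable def DG2 (p : Fin 3 → ℝ) : (Fin 3 → ℝ) →L[ℝ] (Fin 5 → ℝ) :=
  pi ![0, 0, 0, Real.exp (p 0) • proj 0, -(proj 1)]

lemma hDG2 (p : Fin 3 → ℝ) :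
    HasFDerivAt (fun p => ![(0:ℝ), 1, 0, Real.exp (p 0), -(p 1)]) (DG2 p) p := by
  apply hasFDerivAt_pi'.mpr
  intro i
  fin_cases i <;>
    simp only [DG2, Matrix.cons_val_zero, Matrix.cons_val_one, Matrix.head_cons,
      Matrix.cons_val_two, Matrix.tail_cons, Matrix.cons_val_three, Matrix.cons_val_four,
      proj_pi, Fin.isValue, ContinuousLinearMap.comp_zero]
  · exact hasFDerivAt_const _ _
  · exact hasFDerivAt_const _ _
  · exact hasFDerivAt_const _ _
  · exact (hasFDerivAt_apply 0 p).exp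
  · exact (hasFDerivAt_apply 1 p).neg

lemma lie11 : lieD5 xi1 (lieD5 xi1 fMap) = fun p => ![(0:ℝ), 0, Real.exp (p 1), 0, 0] := by
  rw [lie1]; funext p
  show fderiv ℝ _ p (xi1 p) = _
  rw [(hDG1 p).fderiv]
  funext i; fin_cases i <;> simp [DG1, xi1]

lemma lie21 : lieD5 xi2 (lieD5 xi1 fMap) = fun _ => ![(0:ℝ), 0, 0, 0, 0] := by
  rw [lie1]; funext p
  show fderiv ℝ _ p (xi2 p) = _
  rw [(hDG1 p).fderiv]
  funext i; fin_cases i <;> simp [DG1, xi2]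

lemma lie12 : lieD5 xi1 (lieD5 xi2 fMap) = fun _ => ![(0:ℝ), 0, 0, 0, -1] := by
  rw [lie2]; funext p
  show fderiv ℝ _ p (xi1 p) = _
  rw [(hDG2 p).fderiv]
  funext i; fin_cases i <;> simp [DG2, xi1]

lemma lie22 : lieD5 xi2 (lieD5 xi2 fMap) = fun p => ![(0:ℝ), 0, 0, Real.exp (p 0), 0] := by
  rw [lie2]; funext p
  show fderiv ℝ _ p (xi2 p) = _
  rw [(hDG2 p).fderiv]
  funext i; fin_cases i <;> simp [DG2, xi2]

/-- The 5×5 matrix with rows L_{ξ₁}f, L_{ξ₂}f, L_{ξ₁}²f,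
L_{ξ₁}L_{ξ₂}f + L_{ξ₂}L_{ξ₁}f, L_{ξ₂}²f. -/
noncomputable def Dmat (x : Fin 3 → ℝ) : Matrix (Fin 5) (Fin 5) ℝ :=
  Matrix.of ![lieD5 xi1 fMap x, lieD5 xi2 fMap x, lieD5 xi1 (lieD5 xi1 fMap) x,
    lieD5 xi1 (lieD5 xi2 fMap) x + lieD5 xi2 (lieD5 xi1 fMap) x,
    lieD5 xi2 (lieD5 xi2 fMap) x]

theorem stmt8 : ∀ x : Fin 3 → ℝ,
    (Dmat x).det = Real.exp (x 0 + x 1) ∧ IsUnit (Dmat x) := by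
  intro x
  have hdet : (Dmat x).det = Real.exp (x 0 + x 1) := by
    unfold Dmat
    rw [lie11, lie21, lie12, lie22, lie1, lie2]
    simp [Matrix.det_succ_row_zero, Fin.sum_univ_succ, Real.exp_add]
    ring
  exact ⟨hdet, (Matrix.isUnit_iff_isUnit_det _).mpr
    (by rw [hdet]; exact (isUnit_iff_ne_zero).mpr (Real.exp_pos _).ne')⟩
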